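/- If a finite multiplicative matrix semigroup S of d×d real matrices does not contain the zero matrix, then every element of S has spectral radius exactly 1. -/

import Mathlib

/-- The spectral radius of a real matrix: the maximal modulus of its (complex) eigenvalues. -/
noncomputable def specRad {n : Type*} [Fintype n] [DecidableEq n]
    (A : Matrix n n ℝ) : ENNReal :=
  spectralRadius ℂ (A.map (algebraMap ℝ ℂ))

/-- If a finite multiplicative matrix semigroup `S` of `d×d` real matrices does not
contain the zero matrix, then every element of `S` has spectral radius exactly `1`. -/
theorem stmt1 {d : ℕ} (S : Set (Matrix (Fin d) (Fin d) ℝ))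
    (hfin : S.Finite)
    (hmul : ∀ A ∈ S, ∀ B ∈ S, A * B ∈ S)
    (h0 : (0 : Matrix (Fin d) (Fin d) ℝ) ∉ S) :
    ∀ A ∈ S, specRad A = 1 := by
  intro A hA
  rcases Nat.eq_zero_or_pos d with hd | hd
  · exfalso
    apply h0
    have hsub : Subsingleton (Matrix (Fin d) (Fin d) ℝ) := by
      subst hd; infer_instance
    rwa [Subsingleton.elim (0 : Matrix (Fin d) (Fin d) ℝ) A]
  haveI : NeZero d := ⟨hd.ne'⟩
  -- all positive powers of `A` lie in `S`
  have hpowS : ∀ k : ℕ, 1 ≤ k → A ^ k ∈ S := by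
    intro k hk
    induction k with
    | zero => omega
    | succ k ih =>
      rcases Nat.eq_zero_or_pos k with h | h
      · subst h; simpa using hA
      · rw [pow_succ]; exact hmul _ (ih h) _ hA
  -- pigeonhole: two equal powers
  haveI := hfin.to_subtype
  obtain ⟨i, j, hij, hpe⟩ := Finite.exists_ne_map_eq_of_infinite
    (fun k : ℕ => (⟨A ^ (k + 1), hpowS _ (Nat.le_add_left 1 k)⟩ : S))
  have hpe' : A ^ (i + 1) = A ^ (j + 1) := congrArg Subtype.val hpe
  obtain ⟨m, n, hm1, hmn, hAmn⟩ : ∃ m n : ℕ, 1 ≤ m ∧ m < n ∧ A ^ m = A ^ n := by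
    rcases lt_or_gt_of_ne hij with h | h
    · exact ⟨i + 1, j + 1, by omega, by omega, hpe'⟩
    · exact ⟨j + 1, i + 1, by omega, by omega, hpe'.symm⟩
  set r := n - m with hrdef
  have hr : 1 ≤ r := by omega
  have hstep : ∀ s, m ≤ s → A ^ (s + r) = A ^ s := by
    intro s hs
    have h1 : A ^ (s + r) = A ^ (s - m) * A ^ n := by
      rw [← pow_add]; congr 1; omega
    have h2 : A ^ s = A ^ (s - m) * A ^ m := by
      rw [← pow_add]; congr 1; omega
    rw [h1, ← hAmn, ← h2]
  have hmulr : ∀ k s, m ≤ s → A ^ (s + k * r) = A ^ s := by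
    intro k
    induction k with
    | zero => simp
    | succ k ih =>
      intro s hs
      have h1 : s + (k + 1) * r = (s + r) + k * r := by ring
      rw [h1, ih _ (by omega), hstep s hs]
  set t := m * r with htdef
  have ht1 : 1 ≤ t := Nat.one_le_iff_ne_zero.mpr (by positivity)
  have htm : m ≤ t := Nat.le_mul_of_pos_right m hr
  have hidem : A ^ t * A ^ t = A ^ t := by
    rw [← pow_add]
    exact hmulr m t htm
  -- pass to complex matrices
  set f := (algebraMap ℝ ℂ).mapMatrix (m := Fin d) with hf
  set M := A.map (algebraMap ℝ ℂ) with hM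
  have hMf : M = f A := rfl
  have hMpow : ∀ k : ℕ, M ^ k = f (A ^ k) := fun k => by
    rw [hMf, ← map_pow]
  have hspecrad : specRad A = spectralRadius ℂ M := rfl
  -- every spectral value z satisfies z ^ n = z ^ m
  have hspec_eq : ∀ z ∈ spectrum ℂ M, z ^ n = z ^ m := by
    intro z hz
    have h1 : Polynomial.eval z (Polynomial.X ^ n - Polynomial.X ^ m : Polynomial ℂ) ∈
        spectrum ℂ ((Polynomial.aeval M) (Polynomial.X ^ n - Polynomial.X ^ m : Polynomial ℂ)) :=
      spectrum.subset_polynomial_aeval M _ ⟨z, hz, rfl⟩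
    have h2 : (Polynomial.aeval M) (Polynomial.X ^ n - Polynomial.X ^ m : Polynomial ℂ) = 0 := by
      rw [map_sub, Polynomial.aeval_X_pow, Polynomial.aeval_X_pow, hMpow, hMpow, ← hAmn,
        sub_self]
    rw [h2, spectrum.zero_eq] at h1
    have h3 : z ^ n - z ^ m = 0 := by simpa using h1
    exact sub_eq_zero.mp h3
  -- hence every spectral value has norm at most 1
  have hnorm_le : ∀ z ∈ spectrum ℂ M, ‖z‖₊ ≤ 1 := by
    intro z hz
    by_contra hgt
    push_neg at hgt
    have h1 : ‖z‖₊ ^ m < ‖z‖₊ ^ n := pow_lt_pow_right₀ hgt hmn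
    have h2 : ‖z‖₊ ^ n = ‖z‖₊ ^ m := by
      rw [← nnnorm_pow, ← nnnorm_pow, hspec_eq z hz]
    rw [h2] at h1
    exact lt_irrefl _ h1
  -- the idempotent `A ^ t` gives a spectral value of norm 1
  have heS : A ^ t ∈ S := hpowS t ht1
  have hene : A ^ t ≠ 0 := fun h => h0 (h ▸ heS)
  have hMene : M ^ t ≠ 0 := by
    intro h
    apply hene
    rw [hMpow] at h
    ext i j
    have h2 : ((A ^ t).map (algebraMap ℝ ℂ)) i j = 0 := by
      rw [show (A ^ t).map (algebraMap ℝ ℂ) = f (A ^ t) from rfl, h]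
      rfl
    rw [Matrix.map_apply] at h2
    exact (algebraMap ℝ ℂ).injective (by simpa using h2)
  have hMidem : M ^ t * M ^ t = M ^ t := by
    rw [hMpow, ← map_mul, hidem]
  have h1mem : (1 : ℂ) ∈ spectrum ℂ (M ^ t) := by
    rw [spectrum.mem_iff]
    intro hu
    apply hMene
    obtain ⟨u, hu⟩ := hu
    have hz : M ^ t * (algebraMap ℂ (Matrix (Fin d) (Fin d) ℂ) 1 - M ^ t) = 0 := by
      rw [map_one, mul_sub, mul_one, hMidem, sub_self]
    calc M ^ t = M ^ t * (↑u * ↑u⁻¹) := by rw [Units.mul_inv, mul_one]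
      _ = (M ^ t * ↑u) * ↑u⁻¹ := by rw [mul_assoc]
      _ = 0 := by rw [hu, hz, zero_mul]
  obtain ⟨z, hz, hzt⟩ : ∃ z ∈ spectrum ℂ M, z ^ t = 1 := by
    rw [spectrum.map_pow_of_pos M (show 0 < t by omega)] at h1mem
    obtain ⟨z, hz, hzt⟩ := h1mem
    exact ⟨z, hz, hzt⟩
  have hz1 : ‖z‖₊ = 1 := by
    have hzp : ‖z‖₊ ^ t = 1 := by rw [← nnnorm_pow, hzt, nnnorm_one]
    exact (pow_eq_one_iff_of_nonneg zero_le (show t ≠ 0 by omega)).mp hzp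
  rw [hspecrad]
  show (⨆ k ∈ spectrum ℂ M, (‖k‖₊ : ENNReal)) = 1
  apply le_antisymm
  · refine iSup₂_le fun w hw => ?_
    rw [← ENNReal.coe_one]
    exact ENNReal.coe_le_coe.mpr (hnorm_le w hw)
  · have hle := le_iSup₂ (f := fun k (_ : k ∈ spectrum ℂ M) => (‖k‖₊ : ENNReal)) z hz
    rw [hz1, ENNReal.coe_one] at hle
    exact hle
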